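/- Let ν = n + 1/4, and define U(t) near t = 2^{10} implicitly for 0 < t < 2^{10} by (2/3)(-U(t))^{3/2} = arccos((t - 2^9)/2^9) - (√2 t^{1/4}/8) B_{1 - t/2^{10}}(1/2, 1/4). Then U(t) = (t - 2^{10})/(2^{10}·4^{1/3}) + O((t - 2^{10})^2) as t → 2^{10}. -/

import Mathlib

open Real Filter MeasureTheory intervalIntegral

noncomputable def fI : ℝ → ℝ := fun y => y ^ (-(1:ℝ)/2) * (1 - y) ^ (-(3:ℝ)/4)

noncomputable def Bf : ℝ → ℝ := fun x => ∫ y in (0:ℝ)..x, fI y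

lemma fI_contOn : ContinuousOn fI (Set.Ioo (0:ℝ) 1) := by
  intro y hy
  apply ContinuousAt.continuousWithinAt
  exact (Real.continuousAt_rpow_const _ _ (Or.inl hy.1.ne')).mul
    ((Real.continuousAt_rpow_const _ _ (Or.inl (by linarith [hy.2]))).comp
      ((continuous_const.sub continuous_id).continuousAt))

lemma fI_lower {x y : ℝ} (hx1 : x < 1) (hy : y ∈ Set.Icc (0:ℝ) x) :
    y ^ (-(1:ℝ)/2) ≤ fI y := by
  have h1 : (0:ℝ) < 1 - y := by linarith [hy.2]
  have h2 : (1:ℝ) ≤ (1 - y) ^ (-(3:ℝ)/4) :=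
    Real.one_le_rpow_of_pos_of_le_one_of_nonpos h1 (by linarith [hy.1]) (by norm_num)
  calc y ^ (-(1:ℝ)/2) = y ^ (-(1:ℝ)/2) * 1 := by ring
    _ ≤ fI y := by
        unfold fI
        exact mul_le_mul_of_nonneg_left h2 (Real.rpow_nonneg hy.1 _)

lemma fI_upper {x y : ℝ} (hx1 : x < 1) (hy : y ∈ Set.Icc (0:ℝ) x) :
    fI y ≤ (1-x) ^ (-(3:ℝ)/4) * y ^ (-(1:ℝ)/2) := by
  have h1 : (0:ℝ) < 1 - x := by linarith
  have h2 : (1 - y) ^ (-(3:ℝ)/4) ≤ (1-x) ^ (-(3:ℝ)/4) :=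
    Real.rpow_le_rpow_of_nonpos h1 (by linarith [hy.2]) (by norm_num)
  unfold fI
  rw [mul_comm]
  exact mul_le_mul_of_nonneg_right h2 (Real.rpow_nonneg hy.1 _)

lemma fI_nonneg {y : ℝ} (hy : 0 ≤ y) (hy1 : y ≤ 1) : 0 ≤ fI y :=
  mul_nonneg (Real.rpow_nonneg hy _) (Real.rpow_nonneg (by linarith) _)

lemma fI_int {x : ℝ} (hx0 : 0 ≤ x) (hx1 : x < 1) : IntervalIntegrable fI volume 0 x := by
  have hmeas : AEStronglyMeasurable fI (volume.restrict (Set.uIoc 0 x)) := by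
    rw [Set.uIoc_of_le hx0]
    exact (fI_contOn.mono (by
      intro y hy
      exact ⟨hy.1, lt_of_le_of_lt hy.2 hx1⟩)).aestronglyMeasurable measurableSet_Ioc
  have hdom : IntervalIntegrable (fun y => (1-x) ^ (-(3:ℝ)/4) * y ^ (-(1:ℝ)/2)) volume 0 x :=
    (intervalIntegral.intervalIntegrable_rpow' (by norm_num)).const_mul _
  apply hdom.mono_fun hmeas
  rw [Filter.EventuallyLE, ae_restrict_iff' measurableSet_uIoc]
  apply Filter.Eventually.of_forall
  intro y hy
  rw [Set.uIoc_of_le hx0] at hy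
  have hy' : y ∈ Set.Icc (0:ℝ) x := ⟨hy.1.le, hy.2⟩
  rw [Real.norm_eq_abs, Real.norm_eq_abs, abs_of_nonneg (fI_nonneg hy'.1 (by linarith [hy'.2])),
    abs_of_nonneg (mul_nonneg (Real.rpow_nonneg (by linarith) _) (Real.rpow_nonneg hy'.1 _))]
  exact fI_upper hx1 hy'

lemma intlow {x : ℝ} : ∫ y in (0:ℝ)..x, y ^ (-(1:ℝ)/2) = 2 * x ^ ((1:ℝ)/2) := by
  rw [integral_rpow (Or.inl (by norm_num))]
  norm_num
  ring

lemma Bf_lower {x : ℝ} (hx0 : 0 ≤ x) (hx1 : x < 1) : 2 * x ^ ((1:ℝ)/2) ≤ Bf x := by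
  rw [← intlow]
  exact intervalIntegral.integral_mono_on hx0
    (intervalIntegral.intervalIntegrable_rpow' (by norm_num)) (fI_int hx0 hx1)
    (fun y hy => fI_lower hx1 hy)

lemma Bf_upper {x : ℝ} (hx0 : 0 ≤ x) (hx1 : x < 1) :
    Bf x ≤ (1-x) ^ (-(3:ℝ)/4) * (2 * x ^ ((1:ℝ)/2)) := by
  have : ∫ y in (0:ℝ)..x, (1-x) ^ (-(3:ℝ)/4) * y ^ (-(1:ℝ)/2)
      = (1-x) ^ (-(3:ℝ)/4) * (2 * x ^ ((1:ℝ)/2)) := by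
    rw [intervalIntegral.integral_const_mul, intlow]
  rw [← this]
  exact intervalIntegral.integral_mono_on hx0 (fI_int hx0 hx1)
    ((intervalIntegral.intervalIntegrable_rpow' (by norm_num)).const_mul _)
    (fun y hy => fI_upper hx1 hy)

lemma Bf_deriv {x : ℝ} (hx0 : 0 < x) (hx1 : x < 1) : HasDerivAt Bf (fI x) x := by
  have hcont : ContinuousAt fI x :=
    fI_contOn.continuousAt (isOpen_Ioo.mem_nhds ⟨hx0, hx1⟩)
  exact intervalIntegral.integral_hasDerivAt_right (fI_int hx0.le hx1)
    (fI_contOn.stronglyMeasurableAtFilter isOpen_Ioo x ⟨hx0, hx1⟩) hcont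

lemma Bf_nonneg {x : ℝ} (hx0 : 0 ≤ x) (hx1 : x < 1) : 0 ≤ Bf x :=
  le_trans (by positivity) (Bf_lower hx0 hx1)

lemma Bf_contAt {x : ℝ} (hx0 : 0 < x) (hx1 : x < 1) : ContinuousAt Bf x :=
  (Bf_deriv hx0 hx1).continuousAt

noncomputable def FF : ℝ → ℝ := fun t =>
  Real.arccos ((t - 512)/512) - Real.sqrt 2 * t ^ ((1:ℝ)/4) / 8 * Bf (1 - t/1024)

lemma rpow_two_eq (a : ℝ) (h7 : (0:ℝ) ≤ a) : True := trivial

lemma pow1024 : (1024:ℝ) ^ ((3:ℝ)/4) = 128 * Real.sqrt 2 := by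
  have h2 : (0:ℝ) < 2 := by norm_num
  have l1 : (1024:ℝ) ^ ((3:ℝ)/4) = (2:ℝ) ^ ((15:ℝ)/2) := by
    rw [show (1024:ℝ) = (2:ℝ) ^ (10:ℕ) by norm_num, ← Real.rpow_natCast 2 10,
      ← Real.rpow_mul h2.le]
    norm_num
  have l2 : (128 : ℝ) * Real.sqrt 2 = (2:ℝ) ^ ((15:ℝ)/2) := by
    rw [Real.sqrt_eq_rpow, show ((15:ℝ)/2) = (7:ℝ) + 1/2 by norm_num, Real.rpow_add h2,
      show (7:ℝ) = ((7:ℕ):ℝ) by norm_num, Real.rpow_natCast]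
    norm_num
  rw [l1, l2]

lemma sqrt1024 : Real.sqrt 1024 = 32 := by
  rw [show (1024:ℝ) = 32^2 by norm_num, Real.sqrt_sq (by norm_num)]

lemma e_sqrt {t : ℝ} (ht0 : 0 < t) (ht1 : t < 1024) :
    Real.sqrt (1 - ((t - 512)/512)^2) = Real.sqrt t * Real.sqrt (1024 - t) / 512 := by
  have h : 1 - ((t - 512)/512)^2 = t * (1024 - t) / 512^2 := by ring
  rw [h, Real.sqrt_div (by nlinarith) _, Real.sqrt_mul ht0.le,
    Real.sqrt_sq (by norm_num : (0:ℝ) ≤ 512)]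

lemma e_fI {t : ℝ} (ht0 : 0 < t) (ht1 : t < 1024) :
    fI (1 - t/1024) = (32 / Real.sqrt (1024 - t)) * ((128 * Real.sqrt 2) / t ^ ((3:ℝ)/4)) := by
  have hs : (0:ℝ) < 1024 - t := by linarith
  have hx : (1:ℝ) - t/1024 = (1024 - t)/1024 := by ring
  have hx2 : (1:ℝ) - (1 - t/1024) = t/1024 := by ring
  unfold fI
  rw [hx2, hx]
  have e1 : ((1024 - t)/1024 : ℝ) ^ (-(1:ℝ)/2) = 32 / Real.sqrt (1024 - t) := by
    rw [show (-(1:ℝ)/2) = -(1/2) by norm_num, Real.rpow_neg (by positivity),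
      ← Real.sqrt_eq_rpow, Real.sqrt_div hs.le, sqrt1024]
    rw [inv_div]
  have e2 : (t/1024 : ℝ) ^ (-(3:ℝ)/4) = (128 * Real.sqrt 2) / t ^ ((3:ℝ)/4) := by
    rw [show (-(3:ℝ)/4) = -((3:ℝ)/4) by norm_num, Real.rpow_neg (by positivity),
      Real.div_rpow ht0.le (by norm_num : (0:ℝ) ≤ 1024), pow1024]
    field_simp
  rw [e1, e2]

lemma e_t34 {t : ℝ} (ht0 : 0 < t) : t ^ ((3:ℝ)/4) = t ^ ((1:ℝ)/4) * Real.sqrt t := by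
  rw [Real.sqrt_eq_rpow, ← Real.rpow_add ht0]
  norm_num

lemma key_ident {t : ℝ} (ht0 : 0 < t) (ht1 : t < 1024) :
    Real.sqrt 2 * t ^ ((1:ℝ)/4) / 8 * (fI (1 - t/1024) / 1024)
      = 1 / Real.sqrt (1 - ((t - 512)/512)^2) * (1/512) := by
  have hs : (0:ℝ) < 1024 - t := by linarith
  rw [e_sqrt ht0 ht1, e_fI ht0 ht1, e_t34 ht0]
  have h1 : (0:ℝ) < Real.sqrt t := Real.sqrt_pos.mpr ht0
  have h2 : (0:ℝ) < Real.sqrt (1024 - t) := Real.sqrt_pos.mpr hs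
  have h3 : (0:ℝ) < t ^ ((1:ℝ)/4) := Real.rpow_pos_of_pos ht0 _
  have h4 : Real.sqrt 2 * Real.sqrt 2 = 2 := Real.mul_self_sqrt (by norm_num)
  field_simp
  linear_combination 4096 * h4

lemma FF_deriv {t : ℝ} (ht0 : 0 < t) (ht1 : t < 1024) :
    HasDerivAt FF (-(Real.sqrt 2/32) * t ^ (-(3:ℝ)/4) * Bf (1 - t/1024)) t := by
  have hx0 : (0:ℝ) < 1 - t/1024 := by linarith
  have hx1 : (1:ℝ) - t/1024 < 1 := by linarith
  -- arccos part
  have hv : HasDerivAt (fun t : ℝ => (t - 512)/512) (1/512) t := by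
    simpa using ((hasDerivAt_id t).sub_const 512).div_const 512
  have hv1 : ((t - 512)/512 : ℝ) ≠ -1 := by
    intro h; rw [div_eq_iff (by norm_num : (512:ℝ) ≠ 0)] at h; linarith
  have hv2 : ((t - 512)/512 : ℝ) ≠ 1 := by
    intro h; rw [div_eq_iff (by norm_num : (512:ℝ) ≠ 0)] at h; linarith
  have h1 : HasDerivAt (fun t : ℝ => Real.arccos ((t - 512)/512))
      (-(1 / Real.sqrt (1 - ((t - 512)/512)^2)) * (1/512)) t :=
    HasDerivAt.comp (h₂ := Real.arccos) (h := fun t : ℝ => (t - 512)/512) t (Real.hasDerivAt_arccos hv1 hv2) hv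
  -- Bf composed part
  have hinner : HasDerivAt (fun t : ℝ => 1 - t/1024) (-(1/1024)) t := by
    simpa using ((hasDerivAt_id t).div_const 1024).const_sub 1
  have h2 : HasDerivAt (fun t : ℝ => Bf (1 - t/1024)) (fI (1 - t/1024) * -(1/1024)) t :=
    HasDerivAt.comp (h₂ := Bf) (h := fun t : ℝ => 1 - t/1024) t (Bf_deriv hx0 hx1) hinner
  -- rpow part
  have h3 : HasDerivAt (fun t : ℝ => Real.sqrt 2 * t ^ ((1:ℝ)/4) / 8)
      (Real.sqrt 2 / 8 * ((1/4) * t ^ ((1:ℝ)/4 - 1))) t := by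
    have : HasDerivAt (fun y : ℝ => Real.sqrt 2 / 8 * y ^ ((1:ℝ)/4))
        (Real.sqrt 2 / 8 * ((1/4) * t ^ ((1:ℝ)/4 - 1))) t :=
      (Real.hasDerivAt_rpow_const (p := (1:ℝ)/4) (Or.inl ht0.ne')).const_mul
      (Real.sqrt 2 / 8)
    have h' : HasDerivAt (fun y : ℝ => Real.sqrt 2 / 8 * y ^ ((1:ℝ)/4) / 1)
        (Real.sqrt 2 / 8 * ((1/4) * t ^ ((1:ℝ)/4 - 1)) / 1) t := this.div_const 1
    convert h' using 1
    · funext x; ring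
    · ring
  have h4 : HasDerivAt (fun t : ℝ => Real.sqrt 2 * t ^ ((1:ℝ)/4) / 8 * Bf (1 - t/1024))
      (Real.sqrt 2 / 8 * ((1/4) * t ^ ((1:ℝ)/4 - 1)) * Bf (1 - t/1024)
        + Real.sqrt 2 * t ^ ((1:ℝ)/4) / 8 * (fI (1 - t/1024) * -(1/1024))) t := h3.mul h2
  have h5 : HasDerivAt (fun t : ℝ => Real.arccos ((t - 512)/512)
        - Real.sqrt 2 * t ^ ((1:ℝ)/4) / 8 * Bf (1 - t/1024))
      (-(1 / Real.sqrt (1 - ((t - 512)/512)^2)) * (1/512)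
        - (Real.sqrt 2 / 8 * ((1/4) * t ^ ((1:ℝ)/4 - 1)) * Bf (1 - t/1024)
          + Real.sqrt 2 * t ^ ((1:ℝ)/4) / 8 * (fI (1 - t/1024) * -(1/1024)))) t := h1.sub h4
  convert h5 using 1
  · rfl
  have e0 : t ^ ((1:ℝ)/4 - 1) = t ^ (-(3:ℝ)/4) := by norm_num
  have e1 : Real.sqrt 2 * t ^ ((1:ℝ)/4) / 8 * (fI (1 - t/1024) * -(1/1024))
      = -(1 / Real.sqrt (1 - ((t - 512)/512)^2) * (1/512)) := by
    have := key_ident ht0 ht1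
    linear_combination -this
  rw [e0] at *
  linear_combination e1

lemma Bf_le_half {x : ℝ} (hx0 : 0 ≤ x) (hx : x ≤ 1/2) :
    Bf x ≤ 2 ^ ((3:ℝ)/4) * (2 * Real.sqrt x) := by
  have h1 : Bf x ≤ (1-x) ^ (-(3:ℝ)/4) * (2 * x ^ ((1:ℝ)/2)) := Bf_upper hx0 (by linarith)
  have h2 : (1-x : ℝ) ^ (-(3:ℝ)/4) ≤ 2 ^ ((3:ℝ)/4) := by
    have : ((1:ℝ)/2) ^ (-(3:ℝ)/4) = 2 ^ ((3:ℝ)/4) := by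
      rw [show ((1:ℝ)/2) = 2⁻¹ by norm_num, ← Real.rpow_neg_one 2,
        ← Real.rpow_mul (by norm_num : (0:ℝ) ≤ 2)]
      norm_num
    rw [← this]
    exact Real.rpow_le_rpow_of_nonpos (by norm_num) (by linarith) (by norm_num)
  calc Bf x ≤ (1-x) ^ (-(3:ℝ)/4) * (2 * x ^ ((1:ℝ)/2)) := h1
    _ ≤ 2 ^ ((3:ℝ)/4) * (2 * x ^ ((1:ℝ)/2)) :=
        mul_le_mul_of_nonneg_right h2 (by positivity)
    _ = 2 ^ ((3:ℝ)/4) * (2 * Real.sqrt x) := by rw [Real.sqrt_eq_rpow]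

lemma Bf_comp_tendsto : Filter.Tendsto (fun t : ℝ => Bf (1 - t/1024))
    (nhdsWithin 1024 (Set.Iio 1024)) (nhds 0) := by
  have hco : Continuous (fun t : ℝ => 2 ^ ((3:ℝ)/4) * (2 * Real.sqrt (1 - t/1024))) := by
    continuity
  have hup : Filter.Tendsto (fun t : ℝ => 2 ^ ((3:ℝ)/4) * (2 * Real.sqrt (1 - t/1024)))
      (nhdsWithin 1024 (Set.Iio 1024)) (nhds 0) := by
    have := (hco.tendsto 1024).mono_left
      (nhdsWithin_le_nhds : nhdsWithin (1024:ℝ) (Set.Iio 1024) ≤ nhds 1024)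
    simpa using this
  apply tendsto_of_tendsto_of_tendsto_of_le_of_le' tendsto_const_nhds hup
  · filter_upwards [Ioo_mem_nhdsLT_of_mem (Set.mem_Ioc.mpr ⟨(by norm_num : (512:ℝ) < 1024), le_refl _⟩)] with t ht
    simp only [Set.mem_Ioo] at ht
    exact Bf_nonneg (by linarith [ht.2]) (by linarith [ht.1])
  · filter_upwards [Ioo_mem_nhdsLT_of_mem (Set.mem_Ioc.mpr ⟨(by norm_num : (512:ℝ) < 1024), le_refl _⟩)] with t ht
    simp only [Set.mem_Ioo] at ht
    exact Bf_le_half (by linarith [ht.2]) (by linarith [ht.1])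

lemma FF_tendsto0 : Filter.Tendsto FF (nhdsWithin 1024 (Set.Iio 1024)) (nhds 0) := by
  have h1 : Filter.Tendsto (fun t : ℝ => Real.arccos ((t - 512)/512))
      (nhdsWithin 1024 (Set.Iio 1024)) (nhds 0) := by
    have hc : Continuous (fun t : ℝ => Real.arccos ((t - 512)/512)) :=
      Real.continuous_arccos.comp (by continuity)
    have := (hc.tendsto 1024).mono_left
      (nhdsWithin_le_nhds : nhdsWithin (1024:ℝ) (Set.Iio 1024) ≤ nhds 1024)
    simpa [show ((1024:ℝ)-512)/512 = 1 from by norm_num, Real.arccos_one] using this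
  have h2 : Filter.Tendsto (fun t : ℝ => Real.sqrt 2 * t ^ ((1:ℝ)/4) / 8)
      (nhdsWithin 1024 (Set.Iio 1024)) (nhds (Real.sqrt 2 * (1024:ℝ) ^ ((1:ℝ)/4) / 8)) := by
    have hc : ContinuousAt (fun t : ℝ => Real.sqrt 2 * t ^ ((1:ℝ)/4) / 8) 1024 :=
      ((Real.continuousAt_rpow_const _ _ (Or.inl (by norm_num))).const_mul _).div_const _
    exact hc.tendsto.mono_left
      (nhdsWithin_le_nhds : nhdsWithin (1024:ℝ) (Set.Iio 1024) ≤ nhds 1024)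
  have h3 := h2.mul Bf_comp_tendsto
  rw [mul_zero] at h3
  have := h1.sub h3
  rw [sub_zero] at this
  exact this

lemma phi_deriv {u : ℝ} (hu : u < 1024) :
    HasDerivAt (fun u : ℝ => -(2/3) * Real.sqrt (1024 - u)^3) (Real.sqrt (1024 - u)) u := by
  have hs : (0:ℝ) < 1024 - u := by linarith
  have hsq : (0:ℝ) < Real.sqrt (1024 - u) := Real.sqrt_pos.mpr hs
  have hinner : HasDerivAt (fun u : ℝ => 1024 - u) (-1) u := by
    simpa using (hasDerivAt_id u).const_sub 1024
  have h1 : HasDerivAt (fun u : ℝ => Real.sqrt (1024 - u))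
      (1 / (2 * Real.sqrt (1024 - u)) * (-1)) u :=
    (Real.hasDerivAt_sqrt hs.ne').comp u hinner
  have h2 : HasDerivAt (fun u : ℝ => -(2/3) * Real.sqrt (1024 - u)^3)
      (-(2/3) * (↑3 * Real.sqrt (1024 - u) ^ (3 - 1) * (1 / (2 * Real.sqrt (1024 - u)) * -1))) u :=
    (h1.fun_pow 3).const_mul (-(2/3) : ℝ)
  convert h2 using 1
  have h3 : Real.sqrt (1024 - u) ^ 2 = 1024 - u := Real.sq_sqrt hs.le
  field_simp

lemma int_sqrt {t t₁ : ℝ} (h : t ≤ t₁) (h1 : t₁ < 1024) :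
    ∫ u in t..t₁, Real.sqrt (1024 - u)
      = (2/3) * Real.sqrt (1024 - t)^3 - (2/3) * Real.sqrt (1024 - t₁)^3 := by
  have hcont : Continuous (fun u : ℝ => Real.sqrt (1024 - u)) :=
    Real.continuous_sqrt.comp (by continuity)
  have := intervalIntegral.integral_eq_sub_of_hasDerivAt
    (f := fun u : ℝ => -(2/3) * Real.sqrt (1024 - u)^3)
    (f' := fun u : ℝ => Real.sqrt (1024 - u))
    (fun u hu => by
      rw [Set.uIcc_of_le h] at hu
      exact phi_deriv (lt_of_le_of_lt hu.2 h1))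
    (hcont.intervalIntegrable t t₁)
  rw [this]; ring

noncomputable def hg : ℝ → ℝ := fun u => Real.sqrt 2/32 * u ^ (-(3:ℝ)/4) * Bf (1 - u/1024)

noncomputable def CC : ℝ → ℝ := fun t =>
  Real.sqrt 2/512 * t ^ (-(3:ℝ)/4) * (t/1024) ^ (-(3:ℝ)/4)

lemma hg_contAt {u : ℝ} (hu0 : 0 < u) (hu1 : u < 1024) : ContinuousAt hg u := by
  have hx0 : (0:ℝ) < 1 - u/1024 := by linarith
  have hx1 : (1:ℝ) - u/1024 < 1 := by linarith
  have hcb : ContinuousAt (fun x : ℝ => Bf (1 - x/1024)) u := by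
    have h := ContinuousAt.comp (x := u) (g := Bf) (f := fun x : ℝ => 1 - x/1024)
      (Bf_contAt hx0 hx1) (by fun_prop)
    exact h
  exact (continuousAt_const.mul (Real.continuousAt_rpow_const _ _ (Or.inl hu0.ne'))).mul hcb

lemma sqrt_x_eq {u : ℝ} (hu1 : u ≤ 1024) :
    Real.sqrt (1 - u/1024) = Real.sqrt (1024 - u) / 32 := by
  rw [show (1:ℝ) - u/1024 = (1024 - u)/1024 by ring, Real.sqrt_div (by linarith), sqrt1024]

lemma rpow1024neg : (1024:ℝ) ^ (-(3:ℝ)/4) = (128 * Real.sqrt 2)⁻¹ := by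
  rw [show (-(3:ℝ)/4) = -((3:ℝ)/4) by norm_num, Real.rpow_neg (by norm_num), pow1024]

lemma hg_lower {u : ℝ} (hu : 512 < u) (hu1 : u < 1024) :
    (1/65536) * Real.sqrt (1024 - u) ≤ hg u := by
  have hu0 : (0:ℝ) < u := by linarith
  have hx0 : (0:ℝ) < 1 - u/1024 := by linarith
  have hx1 : (1:ℝ) - u/1024 < 1 := by linarith
  have hb : Real.sqrt (1024 - u) / 16 ≤ Bf (1 - u/1024) := by
    have := Bf_lower hx0.le hx1
    rw [← Real.sqrt_eq_rpow, sqrt_x_eq hu1.le] at this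
    linarith
  have hr : ((128 * Real.sqrt 2)⁻¹ : ℝ) ≤ u ^ (-(3:ℝ)/4) := by
    rw [← rpow1024neg]
    exact Real.rpow_le_rpow_of_nonpos hu0 hu1.le (by norm_num)
  have h4 : Real.sqrt 2 * Real.sqrt 2 = 2 := Real.mul_self_sqrt (by norm_num)
  have h5 : (0:ℝ) < Real.sqrt 2 := Real.sqrt_pos.mpr (by norm_num)
  have hsnn : (0:ℝ) ≤ Real.sqrt (1024 - u) := Real.sqrt_nonneg _
  have e0 : Real.sqrt 2 / 32 * (128 * Real.sqrt 2)⁻¹ = 1/4096 := by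
    rw [mul_inv]
    field_simp
    nlinarith [h4]
  have e : (1/65536 : ℝ) * Real.sqrt (1024 - u)
      = Real.sqrt 2/32 * (128 * Real.sqrt 2)⁻¹ * (Real.sqrt (1024 - u) / 16) := by
    rw [e0]; ring
  rw [e]
  unfold hg
  have step1 : Real.sqrt 2/32 * (128 * Real.sqrt 2)⁻¹ * (Real.sqrt (1024 - u) / 16)
      ≤ Real.sqrt 2/32 * u ^ (-(3:ℝ)/4) * (Real.sqrt (1024 - u) / 16) := by
    apply mul_le_mul_of_nonneg_right _ (by positivity)
    exact mul_le_mul_of_nonneg_left hr (by positivity)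
  refine step1.trans ?_
  exact mul_le_mul_of_nonneg_left hb (by positivity)

lemma hg_upper {t u : ℝ} (ht : 512 < t) (htu : t ≤ u) (hu1 : u < 1024) :
    hg u ≤ CC t * Real.sqrt (1024 - u) := by
  have hu0 : (0:ℝ) < u := by linarith
  have ht0 : (0:ℝ) < t := by linarith
  have hx0 : (0:ℝ) < 1 - u/1024 := by linarith
  have hx1 : (1:ℝ) - u/1024 < 1 := by linarith
  have hb : Bf (1 - u/1024) ≤ (t/1024) ^ (-(3:ℝ)/4) * (Real.sqrt (1024 - u) / 16) := by
    have h1 := Bf_upper hx0.le hx1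
    have e1 : (1:ℝ) - (1 - u/1024) = u/1024 := by ring
    rw [e1] at h1
    have h2 : (u/1024 : ℝ) ^ (-(3:ℝ)/4) ≤ (t/1024) ^ (-(3:ℝ)/4) :=
      Real.rpow_le_rpow_of_nonpos (by positivity) (by linarith [htu]) (by norm_num)
    have h3 : (2 : ℝ) * (1 - u/1024) ^ ((1:ℝ)/2) = Real.sqrt (1024 - u) / 16 := by
      rw [← Real.sqrt_eq_rpow, sqrt_x_eq hu1.le]; ring
    calc Bf (1 - u/1024) ≤ (u/1024) ^ (-(3:ℝ)/4) * (2 * (1 - u/1024) ^ ((1:ℝ)/2)) := h1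
      _ ≤ (t/1024) ^ (-(3:ℝ)/4) * (2 * (1 - u/1024) ^ ((1:ℝ)/2)) :=
          mul_le_mul_of_nonneg_right h2 (by positivity)
      _ = (t/1024) ^ (-(3:ℝ)/4) * (Real.sqrt (1024 - u) / 16) := by rw [h3]
  have hr : u ^ (-(3:ℝ)/4) ≤ t ^ (-(3:ℝ)/4) :=
    Real.rpow_le_rpow_of_nonpos ht0 htu (by norm_num)
  unfold hg CC
  calc Real.sqrt 2/32 * u ^ (-(3:ℝ)/4) * Bf (1 - u/1024)
      ≤ Real.sqrt 2/32 * u ^ (-(3:ℝ)/4) * ((t/1024) ^ (-(3:ℝ)/4) * (Real.sqrt (1024 - u) / 16)) :=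
        mul_le_mul_of_nonneg_left hb (by positivity)
    _ ≤ Real.sqrt 2/32 * t ^ (-(3:ℝ)/4) * ((t/1024) ^ (-(3:ℝ)/4) * (Real.sqrt (1024 - u) / 16)) := by
        apply mul_le_mul_of_nonneg_right _ (by positivity)
        exact mul_le_mul_of_nonneg_left hr (by positivity)
    _ = Real.sqrt 2/512 * t ^ (-(3:ℝ)/4) * (t/1024) ^ (-(3:ℝ)/4) * Real.sqrt (1024 - u) := by
        ring

lemma FF_key {t t₁ : ℝ} (ht : 512 < t) (htt : t < t₁) (h1 : t₁ < 1024) :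
    FF t = FF t₁ + ∫ u in t..t₁, hg u := by
  have hcontOn : ContinuousOn (fun u : ℝ => -hg u) (Set.uIcc t t₁) := by
    rw [Set.uIcc_of_le htt.le]
    intro u hu
    exact ((hg_contAt (by linarith [hu.1]) (by linarith [hu.2])).neg).continuousWithinAt
  have hftc : ∫ u in t..t₁, -hg u = FF t₁ - FF t := by
    apply intervalIntegral.integral_eq_sub_of_hasDerivAt
    · intro u hu
      rw [Set.uIcc_of_le htt.le] at hu
      have := FF_deriv (show (0:ℝ) < u by linarith [hu.1]) (by linarith [hu.2])
      have e : -(Real.sqrt 2/32) * u ^ (-(3:ℝ)/4) * Bf (1 - u/1024) = -hg u := by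
        unfold hg; ring
      rwa [e] at this
    · exact hcontOn.intervalIntegrable
  rw [intervalIntegral.integral_neg] at hftc
  linarith

lemma FF_int_low {t t₁ : ℝ} (ht : 512 < t) (htt : t < t₁) (h1 : t₁ < 1024) :
    (1/65536) * ((2/3) * Real.sqrt (1024 - t)^3 - (2/3) * Real.sqrt (1024 - t₁)^3)
      ≤ ∫ u in t..t₁, hg u := by
  have hcomp : ∫ u in t..t₁, (1/65536 : ℝ) * Real.sqrt (1024 - u)
      = (1/65536) * ((2/3) * Real.sqrt (1024 - t)^3 - (2/3) * Real.sqrt (1024 - t₁)^3) := by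
    rw [intervalIntegral.integral_const_mul, int_sqrt htt.le h1]
  rw [← hcomp]
  apply intervalIntegral.integral_mono_on htt.le
  · exact (continuous_const.mul (Real.continuous_sqrt.comp (by continuity))).intervalIntegrable t t₁
  · apply ContinuousOn.intervalIntegrable
    rw [Set.uIcc_of_le htt.le]
    intro u hu
    exact (hg_contAt (by linarith [hu.1]) (by linarith [hu.2])).continuousWithinAt
  · intro u hu
    exact hg_lower (by linarith [hu.1]) (by linarith [hu.2])

lemma FF_int_high {t t₁ : ℝ} (ht : 512 < t) (htt : t < t₁) (h1 : t₁ < 1024) :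
    (∫ u in t..t₁, hg u)
      ≤ CC t * ((2/3) * Real.sqrt (1024 - t)^3 - (2/3) * Real.sqrt (1024 - t₁)^3) := by
  have hcomp : ∫ u in t..t₁, CC t * Real.sqrt (1024 - u)
      = CC t * ((2/3) * Real.sqrt (1024 - t)^3 - (2/3) * Real.sqrt (1024 - t₁)^3) := by
    rw [intervalIntegral.integral_const_mul, int_sqrt htt.le h1]
  rw [← hcomp]
  apply intervalIntegral.integral_mono_on htt.le
  · apply ContinuousOn.intervalIntegrable
    rw [Set.uIcc_of_le htt.le]
    intro u hu
    exact (hg_contAt (by linarith [hu.1]) (by linarith [hu.2])).continuousWithinAt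
  · exact (continuous_const.mul (Real.continuous_sqrt.comp (by continuity))).intervalIntegrable t t₁
  · intro u hu
    exact hg_upper ht hu.1 (by linarith [hu.2])

lemma sqrt_cube_tendsto :
    Filter.Tendsto (fun t₁ : ℝ => Real.sqrt (1024 - t₁)^3)
      (nhdsWithin 1024 (Set.Iio 1024)) (nhds 0) := by
  have hc : Continuous (fun t₁ : ℝ => Real.sqrt (1024 - t₁)^3) :=
    (Real.continuous_sqrt.comp (by continuity)).pow 3
  have := (hc.tendsto 1024).mono_left
    (nhdsWithin_le_nhds : nhdsWithin (1024:ℝ) (Set.Iio 1024) ≤ nhds 1024)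
  simpa using this

lemma FF_low {t : ℝ} (ht : 512 < t) (ht1 : t < 1024) :
    (1/65536) * ((2/3) * Real.sqrt (1024 - t)^3) ≤ FF t := by
  have hG : Filter.Tendsto
      (fun t₁ : ℝ => FF t₁ + (1/65536) * ((2/3) * Real.sqrt (1024 - t)^3
        - (2/3) * Real.sqrt (1024 - t₁)^3))
      (nhdsWithin 1024 (Set.Iio 1024))
      (nhds ((1/65536) * ((2/3) * Real.sqrt (1024 - t)^3))) := by
    have h2 := ((tendsto_const_nhds (x := (2/3) * Real.sqrt (1024 - t)^3)
      (f := nhdsWithin (1024:ℝ) (Set.Iio 1024))).sub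
        (sqrt_cube_tendsto.const_mul (2/3 : ℝ))).const_mul (1/65536 : ℝ)
    have := FF_tendsto0.add h2
    simpa using this
  apply le_of_tendsto hG
  filter_upwards [Ioo_mem_nhdsLT_of_mem (Set.mem_Ioc.mpr ⟨ht1, le_refl _⟩)] with t₁ ht₁
  rw [FF_key ht ht₁.1 ht₁.2]
  have := FF_int_low ht ht₁.1 ht₁.2
  linarith

lemma FF_high {t : ℝ} (ht : 512 < t) (ht1 : t < 1024) :
    FF t ≤ CC t * ((2/3) * Real.sqrt (1024 - t)^3) := by
  have hG : Filter.Tendsto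
      (fun t₁ : ℝ => FF t₁ + CC t * ((2/3) * Real.sqrt (1024 - t)^3
        - (2/3) * Real.sqrt (1024 - t₁)^3))
      (nhdsWithin 1024 (Set.Iio 1024))
      (nhds (CC t * ((2/3) * Real.sqrt (1024 - t)^3))) := by
    have h2 := ((tendsto_const_nhds (x := (2/3) * Real.sqrt (1024 - t)^3)
      (f := nhdsWithin (1024:ℝ) (Set.Iio 1024))).sub
        (sqrt_cube_tendsto.const_mul (2/3 : ℝ))).const_mul (CC t)
    have := FF_tendsto0.add h2
    simpa using this
  apply ge_of_tendsto hG
  filter_upwards [Ioo_mem_nhdsLT_of_mem (Set.mem_Ioc.mpr ⟨ht1, le_refl _⟩)] with t₁ ht₁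
  rw [FF_key ht ht₁.1 ht₁.2]
  have := FF_int_high ht ht₁.1 ht₁.2
  linarith

lemma CC_val : CC 1024 = 1/65536 := by
  unfold CC
  have h4 : Real.sqrt 2 * Real.sqrt 2 = 2 := Real.mul_self_sqrt (by norm_num)
  rw [show ((1024:ℝ)/1024) = 1 by norm_num, Real.one_rpow, rpow1024neg, mul_inv]
  field_simp
  nlinarith [h4]

lemma CC_tendsto : Filter.Tendsto CC (nhdsWithin 1024 (Set.Iio 1024)) (nhds (1/65536)) := by
  have c1 : ContinuousAt (fun t : ℝ => t ^ (-(3:ℝ)/4)) 1024 :=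
    Real.continuousAt_rpow_const _ _ (Or.inl (by norm_num))
  have c2 : ContinuousAt (fun t : ℝ => (t/1024) ^ (-(3:ℝ)/4)) 1024 := by
    have := ContinuousAt.comp (x := (1024:ℝ)) (g := fun y : ℝ => y ^ (-(3:ℝ)/4))
      (f := fun t : ℝ => t/1024)
      (Real.continuousAt_rpow_const _ _ (Or.inl (by norm_num : (1024:ℝ)/1024 ≠ 0)))
      (by fun_prop)
    exact this
  have hC : ContinuousAt CC 1024 := (continuousAt_const.mul c1).mul c2
  have := hC.tendsto.mono_left
    (nhdsWithin_le_nhds : nhdsWithin (1024:ℝ) (Set.Iio 1024) ≤ nhds 1024)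
  rwa [CC_val] at this

lemma FF_ratio : Filter.Tendsto (fun t : ℝ => FF t / Real.sqrt (1024 - t)^3)
    (nhdsWithin 1024 (Set.Iio 1024)) (nhds (1/98304)) := by
  have hup : Filter.Tendsto (fun t : ℝ => CC t * (2/3))
      (nhdsWithin 1024 (Set.Iio 1024)) (nhds (1/98304)) := by
    have := CC_tendsto.mul_const (2/3 : ℝ)
    convert this using 2
    norm_num
  apply tendsto_of_tendsto_of_tendsto_of_le_of_le'
    (tendsto_const_nhds (x := (1/98304 : ℝ))) hup
  · filter_upwards [Ioo_mem_nhdsLT_of_mem (Set.mem_Ioc.mpr ⟨(by norm_num : (512:ℝ) < 1024), le_refl _⟩)] with t ht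
    simp only [Set.mem_Ioo] at ht
    have hS : (0:ℝ) < Real.sqrt (1024 - t)^3 :=
      pow_pos (Real.sqrt_pos.mpr (by linarith [ht.2])) 3
    rw [le_div_iff₀ hS]
    have := FF_low ht.1 ht.2
    linarith
  · filter_upwards [Ioo_mem_nhdsLT_of_mem (Set.mem_Ioc.mpr ⟨(by norm_num : (512:ℝ) < 1024), le_refl _⟩)] with t ht
    simp only [Set.mem_Ioo] at ht
    have hS : (0:ℝ) < Real.sqrt (1024 - t)^3 :=
      pow_pos (Real.sqrt_pos.mpr (by linarith [ht.2])) 3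
    rw [div_le_iff₀ hS]
    have := FF_high ht.1 ht.2
    linarith

theorem stmt_19 (B : ℝ → ℝ → ℝ → ℝ)
    (hB : ∀ x a b : ℝ, B x a b = ∫ y in (0 : ℝ)..x, y ^ (a - 1) * (1 - y) ^ (b - 1))
    (U : ℝ → ℝ)
    (hUanal : AnalyticAt ℝ U (2 ^ 10 : ℝ))
    (hUneg : ∀ t : ℝ, 0 < t → t < 2 ^ 10 → U t < 0)
    (himp : ∀ t : ℝ, 0 < t → t < 2 ^ 10 →
      (2 / 3) * (-(U t)) ^ ((3 : ℝ) / 2)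
        = Real.arccos ((t - 2 ^ 9) / 2 ^ 9) -
            Real.sqrt 2 * t ^ ((1 : ℝ) / 4) / 8 * B (1 - t / 2 ^ 10) (1 / 2) (1 / 4)) :
    (fun t : ℝ => U t - (t - 2 ^ 10) / (2 ^ 10 * 4 ^ ((1 : ℝ) / 3)))
      =O[nhds (2 ^ 10 : ℝ)] fun t : ℝ => (t - 2 ^ 10) ^ 2 := by
  have hpow : ((2:ℝ) ^ 10) = 1024 := by norm_num
  have hpow9 : ((2:ℝ) ^ 9) = 512 := by norm_num
  rw [hpow] at hUanal
  -- B agrees with Bf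
  have hBfe : ∀ s : ℝ, B s (1/2) (1/4) = Bf s := by
    intro s
    rw [hB]
    unfold Bf fI
    congr 1
    funext y
    norm_num
  -- himp in terms of FF
  have hFF : ∀ t : ℝ, 0 < t → t < 1024 → (2/3) * (-(U t)) ^ ((3:ℝ)/2) = FF t := by
    intro t h0 h1
    have := himp t h0 (by rw [hpow]; exact h1)
    rw [hpow, hpow9, hBfe] at this
    exact this
  -- -(U t) expressed via FF
  have hUe : ∀ t : ℝ, 512 < t → t < 1024 → -(U t) = ((3/2) * FF t) ^ ((2:ℝ)/3) := by
    intro t h0 h1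
    have hx : (0:ℝ) ≤ -(U t) := by
      have := hUneg t (by linarith) (by rw [hpow]; exact h1); linarith
    have h32 : (3/2 : ℝ) * FF t = (-(U t)) ^ ((3:ℝ)/2) := by
      have := hFF t (by linarith) h1; linarith
    rw [h32, ← Real.rpow_mul hx]
    norm_num
  have hmemIoo : Set.Ioo (512:ℝ) 1024 ∈ nhdsWithin (1024:ℝ) (Set.Iio 1024) :=
    Ioo_mem_nhdsLT_of_mem (Set.mem_Ioc.mpr ⟨(by norm_num : (512:ℝ) < 1024), le_refl _⟩)
  -- U 1024 = 0
  have hU0 : U 1024 = 0 := by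
    have tendA : Filter.Tendsto (fun t : ℝ => -(U t)) (nhdsWithin 1024 (Set.Iio 1024))
        (nhds 0) := by
      have hinner : Filter.Tendsto (fun t : ℝ => (3/2) * FF t)
          (nhdsWithin 1024 (Set.Iio 1024)) (nhds 0) := by
        have := FF_tendsto0.const_mul (3/2 : ℝ)
        simpa using this
      have hcont : ContinuousAt (fun z : ℝ => z ^ ((2:ℝ)/3)) 0 :=
        Real.continuousAt_rpow_const _ _ (Or.inr (by norm_num))
      have h := (hcont.tendsto.comp hinner)
      rw [Real.zero_rpow (by norm_num)] at h
      apply h.congr'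
      filter_upwards [hmemIoo] with t ht
      exact (hUe t ht.1 ht.2).symm
    have tendB : Filter.Tendsto (fun t : ℝ => -(U t)) (nhdsWithin 1024 (Set.Iio 1024))
        (nhds (-(U 1024))) :=
      (hUanal.continuousAt.neg.tendsto).mono_left nhdsWithin_le_nhds
    have := tendsto_nhds_unique tendB tendA
    linarith
  -- derivative value
  have hderiv : deriv U 1024 = ((1/65536 : ℝ)) ^ ((2:ℝ)/3) := by
    have hdiff : HasDerivAt U (deriv U 1024) 1024 :=
      hUanal.differentiableAt.hasDerivAt
    have hslope : Filter.Tendsto (slope U 1024) (nhdsWithin 1024 (Set.Iio 1024))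
        (nhds (deriv U 1024)) :=
      (hasDerivAt_iff_tendsto_slope.mp hdiff).mono_left
        (nhdsWithin_mono 1024 (fun x hx => ne_of_lt hx))
    have htend2 : Filter.Tendsto (slope U 1024) (nhdsWithin 1024 (Set.Iio 1024))
        (nhds (((3/2 : ℝ) * (1/98304)) ^ ((2:ℝ)/3))) := by
      have hinner : Filter.Tendsto (fun t : ℝ => (3/2) * (FF t / Real.sqrt (1024 - t)^3))
          (nhdsWithin 1024 (Set.Iio 1024)) (nhds ((3/2 : ℝ) * (1/98304))) :=
        FF_ratio.const_mul (3/2 : ℝ)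
      have hcont : ContinuousAt (fun z : ℝ => z ^ ((2:ℝ)/3)) ((3/2 : ℝ) * (1/98304)) :=
        Real.continuousAt_rpow_const _ _ (Or.inl (by norm_num))
      have h := hcont.tendsto.comp hinner
      apply h.congr'
      filter_upwards [hmemIoo] with t ht
      have hs : (0:ℝ) < 1024 - t := by linarith [ht.2]
      have hFFnn : (0:ℝ) ≤ (3/2 : ℝ) * FF t := by
        have hx : (0:ℝ) ≤ -(U t) := by
          have := hUneg t (by linarith [ht.1]) (by rw [hpow]; exact ht.2); linarith
        have h32 : (3/2 : ℝ) * FF t = (-(U t)) ^ ((3:ℝ)/2) := by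
          have := hFF t (by linarith [ht.1]) ht.2; linarith
        rw [h32]; exact Real.rpow_nonneg hx _
      have hScube : Real.sqrt (1024 - t)^3 = (1024 - t) ^ ((3:ℝ)/2) := by
        rw [Real.sqrt_eq_rpow, ← Real.rpow_natCast ((1024 - t) ^ ((1:ℝ)/2)) 3,
          ← Real.rpow_mul hs.le]
        norm_num
      have hSpos : (0:ℝ) < Real.sqrt (1024 - t)^3 := pow_pos (Real.sqrt_pos.mpr hs) 3
      -- slope value
      have e1 : slope U 1024 t = (-(U t)) / (1024 - t) := by
        rw [slope_def_field, hU0, sub_zero, show t - 1024 = -(1024 - t) by ring, div_neg,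
          ← neg_div]
      have e2 : ((Real.sqrt (1024 - t)^3 : ℝ)) ^ ((2:ℝ)/3) = 1024 - t := by
        rw [hScube, ← Real.rpow_mul hs.le]
        norm_num
      have e3 : (3/2 : ℝ) * (FF t / Real.sqrt (1024 - t)^3)
          = ((3/2) * FF t) / Real.sqrt (1024 - t)^3 := by ring
      rw [Function.comp_apply, e1, hUe t ht.1 ht.2, e3, Real.div_rpow hFFnn hSpos.le, e2]
    exact tendsto_nhds_unique hslope htend2 |>.trans (by norm_num)
  -- constant identification
  have h40 : (0:ℝ) < 4 := by norm_num
  have hK : ((1/65536 : ℝ)) ^ ((2:ℝ)/3) = 1/(1024 * 4 ^ ((1:ℝ)/3)) := by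
    have l1 : (1/65536 : ℝ) = (4:ℝ) ^ (-(8:ℝ)) := by
      rw [Real.rpow_neg h40.le, show ((8:ℝ)) = ((8:ℕ):ℝ) by norm_num, Real.rpow_natCast]
      norm_num
    have l2 : ((4:ℝ) ^ (-(8:ℝ))) ^ ((2:ℝ)/3) = (4:ℝ) ^ (-(16:ℝ)/3) := by
      rw [← Real.rpow_mul h40.le]
      norm_num
    have l3 : (1024:ℝ) * 4 ^ ((1:ℝ)/3) = (4:ℝ) ^ ((16:ℝ)/3) := by
      rw [show (1024:ℝ) = (4:ℝ) ^ (5:ℕ) by norm_num, ← Real.rpow_natCast 4 5,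
        ← Real.rpow_add h40]
      norm_num
    rw [l1, l2, l3, show (-(16:ℝ)/3) = -((16:ℝ)/3) by norm_num, Real.rpow_neg h40.le, one_div]
  -- power series expansion
  obtain ⟨p, hp⟩ := hUanal
  have hO := hp.isBigO_sub_partialSum_pow 2
  have hps : ∀ y : ℝ, p.partialSum 2 y = U 1024 + y * deriv U 1024 := by
    intro y
    unfold FormalMultilinearSeries.partialSum
    rw [Finset.sum_range_succ, Finset.sum_range_one]
    rw [hp.coeff_zero (fun _ => y)]
    have e1 : (p 1 fun _ => y) = y * (p 1 fun _ => 1) := by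
      rw [FormalMultilinearSeries.apply_eq_pow_smul_coeff,
        FormalMultilinearSeries.apply_eq_pow_smul_coeff]
      simp [smul_eq_mul]
    rw [e1, hp.deriv]
  have hO2 : (fun y : ℝ => U (1024 + y) - y * (1/(1024 * 4 ^ ((1:ℝ)/3))))
      =O[nhds 0] fun y : ℝ => ‖y‖ ^ 2 := by
    apply hO.congr' _ Filter.EventuallyEq.rfl
    apply Filter.Eventually.of_forall
    intro y
    simp only
    rw [hps y, hU0, hderiv, hK]
    ring
  have hcomp : Filter.Tendsto (fun t : ℝ => t - 1024) (nhds 1024) (nhds 0) := by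
    have h := Filter.Tendsto.sub_const (tendsto_id : Filter.Tendsto id (nhds (1024:ℝ)) (nhds 1024)) 1024
    simpa using h
  have hO3 := hO2.comp_tendsto hcomp
  rw [show nhds ((2:ℝ) ^ 10) = nhds (1024:ℝ) by rw [hpow]]
  simp only [hpow]
  apply (hO3.congr' _ _)
  · apply Filter.Eventually.of_forall
    intro t
    simp only [Function.comp_apply]
    rw [show (1024:ℝ) + (t - 1024) = t by ring]
    ring
  · apply Filter.Eventually.of_forall
    intro t
    simp only [Function.comp_apply]
    rw [Real.norm_eq_abs, sq_abs]
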